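/- Let f : {0,1}^n → {0,1} be computable by a decision tree of depth at most d, d ≥ 1, and let M = x_{i_1}⋯x_{i_{d'}} with d' ≤ d be a maximal monomial of the multilinear polynomial representation of f over F₂. Then for every choice of bits ξ_1,…,ξ_{d'} ∈ {0,1}, the restriction f_{|x_{i_1}←ξ_1,…,x_{i_{d'}}←ξ_{d'}} is computable by a decision tree of depth at most d−1. -/

import Mathlib

/-- Binary decision trees over `n` Boolean variables. -/
inductive DTree (n : ℕ) : Type where
  | leaf : Bool → DTree n
  | node : Fin n → DTree n → DTree n → DTree n

namespace DTree

/-- Evaluation of a decision tree on an input `x`: at a node labeled `i`,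
go right if `x i = true` and left otherwise. -/
def eval {n : ℕ} : DTree n → (Fin n → Bool) → Bool
  | leaf b, _ => b
  | node i t0 t1, x => if x i then eval t1 x else eval t0 x

/-- Depth of a decision tree: maximum number of edges on a root-to-leaf path. -/
def depth {n : ℕ} : DTree n → ℕ
  | leaf _ => 0
  | node _ t0 t1 => 1 + max (depth t0) (depth t1)

end DTree

/-- Evaluation of a multilinear monomial (a set of variables) at a point. -/
def evalMono {n : ℕ} (M : Finset (Fin n)) (x : Fin n → Bool) : Bool :=
  decide (∀ i ∈ M, x i = true)

/-- Evaluation at `x` of the multilinear polynomial over `F₂` whose set of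
monomials is `S` (sum modulo 2 of the monomials of `S`). -/
def polyEval {n : ℕ} (S : Finset (Finset (Fin n))) (x : Fin n → Bool) : Bool :=
  decide ((S.filter (fun M => evalMono M x = true)).card % 2 = 1)

/-- `S` is the (unique) multilinear `F₂`-polynomial representation of `f`:
the polynomial with monomial set `S` computes `f` everywhere. -/
def Represents {n : ℕ} (S : Finset (Finset (Fin n))) (f : (Fin n → Bool) → Bool) : Prop :=
  ∀ x, polyEval S x = f x

/-- The restriction of `f` obtained by substituting, for each `i ∈ A`, the
value `ξ i` for the variable `x_i`. -/
def restrictSet {n : ℕ} (f : (Fin n → Bool) → Bool) (A : Finset (Fin n))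
    (ξ : Fin n → Bool) : (Fin n → Bool) → Bool :=
  fun x => f (fun i => if i ∈ A then ξ i else x i)

namespace Stmt3Aux

open Finset

variable {n : ℕ}

def ind (B : Finset (Fin n)) : Fin n → Bool := fun i => decide (i ∈ B)

def b2 (b : Bool) : ZMod 2 := if b then 1 else 0

lemma b2_inj {a b : Bool} (h : b2 a = b2 b) : a = b := by
  cases a <;> cases b <;> simp_all [b2]

def p2 (S : Finset (Finset (Fin n))) (x : Fin n → Bool) : ZMod 2 :=
  ∑ C ∈ S, b2 (evalMono C x)

lemma cast_parity (k : ℕ) : ((k : ZMod 2)) = if k % 2 = 1 then 1 else 0 := by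
  rw [← ZMod.natCast_mod k 2]
  rcases Nat.mod_two_eq_zero_or_one k with h | h <;> simp [h]

lemma p2_polyEval (S : Finset (Finset (Fin n))) (x : Fin n → Bool) :
    p2 S x = b2 (polyEval S x) := by
  have : p2 S x = ((S.filter (fun C => evalMono C x = true)).card : ZMod 2) := by
    rw [← Finset.sum_boole]
    refine Finset.sum_congr rfl fun C _ => ?_
    cases h : evalMono C x <;> simp [b2, h]
  rw [this, cast_parity, polyEval, b2]
  by_cases h : (S.filter (fun C => evalMono C x = true)).card % 2 = 1 <;> simp [h]

lemma represents_iff (S : Finset (Finset (Fin n))) (f : (Fin n → Bool) → Bool) :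
    Represents S f ↔ ∀ x, p2 S x = b2 (f x) := by
  constructor
  · intro h x; rw [p2_polyEval, h]
  · intro h x
    exact b2_inj (by rw [← p2_polyEval, h])

/-- Restriction of a decision tree by an assignment on a set of variables. -/
def rT : DTree n → Finset (Fin n) → (Fin n → Bool) → DTree n
  | .leaf b, _, _ => .leaf b
  | .node i t0 t1, A, ξ =>
    if i ∈ A then (if ξ i then rT t1 A ξ else rT t0 A ξ)
    else .node i (rT t0 A ξ) (rT t1 A ξ)

lemma rT_depth (T : DTree n) (A : Finset (Fin n)) (ξ : Fin n → Bool) :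
    (rT T A ξ).depth ≤ T.depth := by
  induction T with
  | leaf b => simp [rT, DTree.depth]
  | node i t0 t1 ih0 ih1 =>
    simp only [rT]
    split
    · split
      · exact le_trans ih1 (by simp [DTree.depth]; omega)
      · exact le_trans ih0 (by simp [DTree.depth]; omega)
    · simp only [DTree.depth]; omega

lemma rT_eval (T : DTree n) (A : Finset (Fin n)) (ξ : Fin n → Bool) (x : Fin n → Bool) :
    (rT T A ξ).eval x = T.eval (fun j => if j ∈ A then ξ j else x j) := by
  induction T with
  | leaf b => simp [rT, DTree.eval]
  | node i t0 t1 ih0 ih1 =>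
    simp only [rT]
    by_cases hi : i ∈ A
    · simp only [hi, if_true, DTree.eval]
      cases h : ξ i <;> simp [h, ih0, ih1, hi]
    · simp only [hi, if_false, DTree.eval]
      cases h : x i <;> simp [h, hi, ih0, ih1]


lemma ind_insert_eq (i : Fin n) (B : Finset (Fin n)) :
    (fun j => if j ∈ ({i} : Finset (Fin n)) then true else ind B j) = ind (insert i B) := by
  funext j
  by_cases h : j = i
  · subst h; simp [ind]
  · simp [ind, h, Finset.mem_insert]

lemma tree_parity : ∀ (k : ℕ) (T : DTree n), T.depth ≤ k → ∀ A : Finset (Fin n), k < A.card →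
    ∑ B ∈ A.powerset, b2 (T.eval (ind B)) = 0 := by
  intro k
  induction k with
  | zero =>
    intro T hT A hA
    cases T with
    | leaf b =>
      simp only [DTree.eval]
      rw [Finset.sum_const, Finset.card_powerset]
      have h2 : ((2 : ℕ) : ZMod 2) = 0 := by decide
      have : ((2 ^ A.card : ℕ) : ZMod 2) = 0 := by
        rw [Nat.cast_pow, h2, zero_pow (by omega)]
      rw [nsmul_eq_mul, this, zero_mul]
    | node i t0 t1 => simp [DTree.depth] at hT
  | succ k IH =>
    intro T hT A hA
    cases T with
    | leaf b =>
      simp only [DTree.eval]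
      rw [Finset.sum_const, Finset.card_powerset]
      have h2 : ((2 : ℕ) : ZMod 2) = 0 := by decide
      have : ((2 ^ A.card : ℕ) : ZMod 2) = 0 := by
        rw [Nat.cast_pow, h2, zero_pow (by omega)]
      rw [nsmul_eq_mul, this, zero_mul]
    | node i t0 t1 =>
      simp only [DTree.depth] at hT
      have h0 : t0.depth ≤ k := by omega
      have h1 : t1.depth ≤ k := by omega
      by_cases hi : i ∈ A
      · have hia : i ∉ A.erase i := Finset.notMem_erase i A
        have hcard : k < (A.erase i).card := by
          rw [Finset.card_erase_of_mem hi]; omega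
        rw [← Finset.insert_erase hi, Finset.sum_powerset_insert hia]
        have e1 : ∑ B ∈ (A.erase i).powerset, b2 ((DTree.node i t0 t1).eval (ind B))
            = ∑ B ∈ (A.erase i).powerset, b2 (t0.eval (ind B)) := by
          refine Finset.sum_congr rfl fun B hB => ?_
          have hiB : i ∉ B := fun h =>
            hia (Finset.mem_powerset.mp hB h)
          simp [DTree.eval, ind, hiB]
        have e2 : ∑ B ∈ (A.erase i).powerset, b2 ((DTree.node i t0 t1).eval (ind (insert i B)))
            = ∑ B ∈ (A.erase i).powerset,
              b2 ((rT t1 {i} (fun _ => true)).eval (ind B)) := by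
          refine Finset.sum_congr rfl fun B hB => ?_
          rw [rT_eval, ind_insert_eq]
          simp [DTree.eval, ind]
        rw [e1, e2, IH t0 h0 _ hcard,
          IH _ (le_trans (rT_depth t1 _ _) h1) _ hcard, add_zero]
      · have : ∑ B ∈ A.powerset, b2 ((DTree.node i t0 t1).eval (ind B))
            = ∑ B ∈ A.powerset, b2 (t0.eval (ind B)) := by
          refine Finset.sum_congr rfl fun B hB => ?_
          have hiB : i ∉ B := fun h => hi (Finset.mem_powerset.mp hB h)
          simp [DTree.eval, ind, hiB]
        rw [this]
        exact IH t0 h0 A (by omega)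

lemma inner_sum : ∀ (A C : Finset (Fin n)),
    (∑ B ∈ A.powerset, if C ⊆ B then (1 : ZMod 2) else 0) = if C = A then 1 else 0 := by
  intro A
  induction A using Finset.induction_on with
  | empty =>
    intro C
    rw [Finset.powerset_empty, Finset.sum_singleton]
    simp [Finset.subset_empty]
  | @insert i A hiA ih =>
    intro C
    rw [Finset.sum_powerset_insert hiA]
    by_cases hiC : i ∈ C
    · have e1 : (∑ B ∈ A.powerset, if C ⊆ B then (1 : ZMod 2) else 0) = 0 := by
        refine Finset.sum_eq_zero fun B hB => ?_
        have : ¬ C ⊆ B := fun h => hiA (Finset.mem_powerset.mp hB (h hiC))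
        simp [this]
      have e2 : (∑ B ∈ A.powerset, if C ⊆ insert i B then (1 : ZMod 2) else 0)
          = ∑ B ∈ A.powerset, if C.erase i ⊆ B then (1 : ZMod 2) else 0 := by
        refine Finset.sum_congr rfl fun B _ => ?_
        simp only [Finset.subset_insert_iff]
      have hiff : C.erase i = A ↔ C = insert i A := by
        constructor
        · intro h; rw [← Finset.insert_erase hiC, h]
        · intro h; rw [h, Finset.erase_insert hiA]
      rw [e1, e2, ih, zero_add]
      simp only [hiff]
    · have e2 : (∑ B ∈ A.powerset, if C ⊆ insert i B then (1 : ZMod 2) else 0)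
          = ∑ B ∈ A.powerset, if C ⊆ B then (1 : ZMod 2) else 0 := by
        refine Finset.sum_congr rfl fun B _ => ?_
        simp only [Finset.subset_insert_iff, Finset.erase_eq_of_notMem hiC]
      have hne : C ≠ insert i A := by
        intro h; exact hiC (h ▸ Finset.mem_insert_self i A)
      rw [e2, ih, CharTwo.add_self_eq_zero, if_neg hne]

lemma coeff_mem {S : Finset (Finset (Fin n))} {f : (Fin n → Bool) → Bool}
    (h : Represents S f) (A : Finset (Fin n)) :
    A ∈ S ↔ (∑ B ∈ A.powerset, b2 (f (ind B))) = 1 := by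
  have hp := (represents_iff S f).mp h
  have key : (∑ B ∈ A.powerset, b2 (f (ind B))) = if A ∈ S then 1 else 0 := by
    calc (∑ B ∈ A.powerset, b2 (f (ind B)))
        = ∑ B ∈ A.powerset, ∑ C ∈ S, b2 (evalMono C (ind B)) := by
          refine Finset.sum_congr rfl fun B _ => ?_
          rw [← hp (ind B)]; rfl
      _ = ∑ C ∈ S, ∑ B ∈ A.powerset, b2 (evalMono C (ind B)) := Finset.sum_comm
      _ = ∑ C ∈ S, ∑ B ∈ A.powerset, if C ⊆ B then (1 : ZMod 2) else 0 := by
          refine Finset.sum_congr rfl fun C _ => Finset.sum_congr rfl fun B _ => ?_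
          have : evalMono C (ind B) = decide (C ⊆ B) := by
            simp [evalMono, ind, Finset.subset_iff]
          rw [this]
          by_cases h : C ⊆ B <;> simp [b2, h]
      _ = ∑ C ∈ S, if C = A then (1 : ZMod 2) else 0 := by
          refine Finset.sum_congr rfl fun C _ => inner_sum A C
      _ = if A ∈ S then 1 else 0 := Finset.sum_ite_eq' S A (fun _ => 1)
  rw [key]
  by_cases hA : A ∈ S <;> simp [hA]

lemma card_le_depth {S : Finset (Finset (Fin n))} {f : (Fin n → Bool) → Bool}
    {T : DTree n} (hS : Represents S f) (hT : ∀ x, T.eval x = f x)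
    {M : Finset (Fin n)} (hM : M ∈ S) : M.card ≤ T.depth := by
  by_contra h
  have h0 := tree_parity T.depth T le_rfl M (by omega)
  have h1 : (∑ B ∈ M.powerset, b2 (f (ind B))) = 0 := by
    rw [← h0]; exact Finset.sum_congr rfl fun B _ => by rw [hT]
  rw [(coeff_mem hS M).mp hM] at h1
  exact one_ne_zero h1


lemma evalMono_congr {C : Finset (Fin n)} {x y : Fin n → Bool}
    (h : ∀ j ∈ C, x j = y j) : evalMono C x = evalMono C y := by
  simp only [evalMono, decide_eq_decide]
  exact ⟨fun H j hj => (h j hj) ▸ H j hj, fun H j hj => (h j hj).symm ▸ H j hj⟩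

section Restrict

variable (f : (Fin n → Bool) → Bool) (S : Finset (Finset (Fin n))) (i : Fin n)

lemma rep0 (hS : Represents S f) :
    Represents (S.filter (fun C => i ∉ C)) (restrictSet f {i} (fun _ => false)) := by
  rw [represents_iff]
  intro x
  have hy := (represents_iff S f).mp hS (fun j => if j ∈ ({i} : Finset (Fin n)) then false else x j)
  set y : Fin n → Bool := fun j => if j ∈ ({i} : Finset (Fin n)) then false else x j with hydef
  have : restrictSet f {i} (fun _ => false) x = f y := rfl
  rw [this, ← hy]
  rw [p2, p2, ← Finset.sum_filter_add_sum_filter_not S (fun C => i ∉ C)]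
  have hz : ∑ C ∈ S.filter (fun C => ¬ i ∉ C), b2 (evalMono C y) = 0 := by
    refine Finset.sum_eq_zero fun C hC => ?_
    have hiC : i ∈ C := by simpa using (Finset.mem_filter.mp hC).2
    have : evalMono C y = false := by
      simp only [evalMono, decide_eq_false_iff_not]
      intro H
      have := H i hiC
      simp [hydef] at this
    rw [this]; rfl
  rw [hz, add_zero]
  refine Finset.sum_congr rfl fun C hC => ?_
  have hiC : i ∉ C := (Finset.mem_filter.mp hC).2
  congr 1
  refine evalMono_congr fun j hj => ?_
  have : j ≠ i := fun h => hiC (h ▸ hj)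
  simp [hydef, this]

lemma rep1 (hS : Represents S f) :
    Represents
      ((S.filter (fun C => i ∉ C) ∪ (S.filter (fun C => i ∈ C)).image (fun C => C.erase i))
        \ (S.filter (fun C => i ∉ C) ∩ (S.filter (fun C => i ∈ C)).image (fun C => C.erase i)))
      (restrictSet f {i} (fun _ => true)) := by
  rw [represents_iff]
  intro x
  set S0 := S.filter (fun C => i ∉ C) with hS0def
  set Q := (S.filter (fun C => i ∈ C)).image (fun C => C.erase i) with hQdef
  have hy := (represents_iff S f).mp hS (fun j => if j ∈ ({i} : Finset (Fin n)) then true else x j)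
  set y : Fin n → Bool := fun j => if j ∈ ({i} : Finset (Fin n)) then true else x j with hydef
  have hyi : y i = true := by simp [hydef]
  have hyx : ∀ j, j ≠ i → y j = x j := by intro j hj; simp [hydef, hj]
  have hrw : restrictSet f {i} (fun _ => true) x = f y := rfl
  rw [hrw, ← hy]
  -- p2 S y = p2 S0 x + p2 Q x
  have hsplit : p2 S y = p2 S0 x + p2 Q x := by
    rw [p2, ← Finset.sum_filter_add_sum_filter_not S (fun C => i ∉ C)]
    simp only [not_not]
    congr 1
    · refine Finset.sum_congr rfl fun C hC => ?_
      have hiC : i ∉ C := (Finset.mem_filter.mp hC).2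
      congr 1
      exact evalMono_congr fun j hj => hyx j (fun h => hiC (h ▸ hj))
    · rw [p2, hQdef, Finset.sum_image]
      · refine Finset.sum_congr rfl fun C hC => ?_
        have hiC : i ∈ C := by simpa using (Finset.mem_filter.mp hC).2
        congr 1
        have h1 : evalMono C y = evalMono (C.erase i) y := by
          simp only [evalMono, decide_eq_decide]
          constructor
          · intro H j hj; exact H j (Finset.mem_of_mem_erase hj)
          · intro H j hj
            by_cases hji : j = i
            · rw [hji]; exact hyi
            · exact H j (Finset.mem_erase.mpr ⟨hji, hj⟩)
        rw [h1]
        exact evalMono_congr fun j hj => hyx j (Finset.mem_erase.mp hj).1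
      · intro C hC D hD h
        have hiC : i ∈ C := by simpa using (Finset.mem_filter.mp hC).2
        have hiD : i ∈ D := by simpa using (Finset.mem_filter.mp hD).2
        rw [← Finset.insert_erase hiC, ← Finset.insert_erase hiD, show C.erase i = D.erase i from h]
  rw [hsplit, p2, Finset.sum_sdiff_eq_sub Finset.inter_subset_union]
  have hui : (∑ C ∈ S0 ∪ Q, b2 (evalMono C x)) + ∑ C ∈ S0 ∩ Q, b2 (evalMono C x)
      = (∑ C ∈ S0, b2 (evalMono C x)) + ∑ C ∈ Q, b2 (evalMono C x) :=
    Finset.sum_union_inter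
  rw [CharTwo.sub_eq_add, hui]
  rfl

end Restrict


lemma main : ∀ d : ℕ, 1 ≤ d → ∀ (f : (Fin n → Bool) → Bool) (T : DTree n),
    (∀ x, T.eval x = f x) → T.depth ≤ d →
    ∀ S : Finset (Finset (Fin n)), Represents S f →
    ∀ M : Finset (Fin n), M ∈ S → M.card ≤ d →
    (∀ M' ∈ S, M' ≠ M → ¬ M ⊆ M') → ∀ ξ : Fin n → Bool,
    ∃ T' : DTree n, T'.depth ≤ d - 1 ∧ ∀ x, T'.eval x = restrictSet f M ξ x := by
  intro d
  induction d using Nat.strong_induction_on with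
  | _ d IH =>
  intro hd f T hT hdepth S hS M hM hMcard hmax ξ
  by_cases hM0 : M = ∅
  · subst hM0
    have hSone : S = {∅} := by
      apply Finset.eq_singleton_iff_unique_mem.mpr
      refine ⟨hM, fun M' hM' => ?_⟩
      by_contra hne
      exact hmax M' hM' hne (Finset.empty_subset M')
    have hfx : ∀ x, f x = true := by
      intro x
      rw [← hS x, hSone]
      simp [polyEval, evalMono, Finset.filter_singleton]
    refine ⟨DTree.leaf true, by simp [DTree.depth], fun x => ?_⟩
    simp [DTree.eval, restrictSet, hfx]
  · have hM1 : 1 ≤ M.card := Finset.card_pos.mpr (Finset.nonempty_iff_ne_empty.mpr hM0)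
    cases T with
    | leaf b =>
      refine ⟨DTree.leaf b, by simp [DTree.depth], fun x => ?_⟩
      show (DTree.leaf b).eval x = restrictSet f M ξ x
      unfold restrictSet
      rw [← hT]
      rfl
    | node i t0 t1 =>
      have hdT : (DTree.node i t0 t1).depth ≤ d := hdepth
      simp only [DTree.depth] at hdT
      have h0 : t0.depth ≤ d - 1 := by omega
      have h1 : t1.depth ≤ d - 1 := by omega
      by_cases hiM : i ∈ M
      · refine ⟨rT (DTree.node i t0 t1) M ξ, ?_, fun x => ?_⟩
        · simp only [rT, hiM, if_true]
          split
          · exact le_trans (rT_depth t1 M ξ) h1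
          · exact le_trans (rT_depth t0 M ξ) h0
        · rw [rT_eval, hT]; rfl
      · set g0 := restrictSet f {i} (fun _ => false) with hg0
        set g1 := restrictSet f {i} (fun _ => true) with hg1
        set T0 := rT t0 {i} (fun _ => false) with hT0def
        set T1 := rT t1 {i} (fun _ => true) with hT1def
        have hT0 : ∀ x, T0.eval x = g0 x := by
          intro x
          rw [hT0def, rT_eval, hg0, restrictSet, ← hT]
          simp [DTree.eval]
        have hT1 : ∀ x, T1.eval x = g1 x := by
          intro x
          rw [hT1def, rT_eval, hg1, restrictSet, ← hT]
          simp [DTree.eval]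
        have hd0 : T0.depth ≤ d - 1 := le_trans (rT_depth _ _ _) h0
        have hd1 : T1.depth ≤ d - 1 := le_trans (rT_depth _ _ _) h1
        set S0 := S.filter (fun C => i ∉ C) with hS0def
        set Q := (S.filter (fun C => i ∈ C)).image (fun C => C.erase i) with hQdef
        set S1 := (S0 ∪ Q) \ (S0 ∩ Q) with hS1def
        have hrep0 : Represents S0 g0 := rep0 f S i hS
        have hrep1 : Represents S1 g1 := rep1 f S i hS
        have hMS0 : M ∈ S0 := Finset.mem_filter.mpr ⟨hM, hiM⟩
        have hMd1 : M.card ≤ d - 1 := le_trans (card_le_depth hrep0 hT0 hMS0) hd0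
        have hd2 : 2 ≤ d := by omega
        have hmax0 : ∀ M' ∈ S0, M' ≠ M → ¬ M ⊆ M' :=
          fun M' h' => hmax M' (Finset.mem_filter.mp h').1
        have hMQ : M ∉ Q := by
          intro h
          obtain ⟨C, hC, hCe⟩ := Finset.mem_image.mp h
          obtain ⟨hCS, hiC⟩ := Finset.mem_filter.mp hC
          have hne : C ≠ M := fun h => hiM (h ▸ hiC)
          exact hmax C hCS hne (hCe ▸ Finset.erase_subset i C)
        have hMS1 : M ∈ S1 := by
          rw [hS1def]
          exact Finset.mem_sdiff.mpr ⟨Finset.mem_union_left _ hMS0,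
            fun h => hMQ (Finset.mem_of_mem_inter_right h)⟩
        have hmax1 : ∀ M' ∈ S1, M' ≠ M → ¬ M ⊆ M' := by
          intro M' h' hne hsub
          have hmem : M' ∈ S0 ∪ Q := (Finset.mem_sdiff.mp h').1
          rcases Finset.mem_union.mp hmem with h'' | h''
          · exact hmax0 M' h'' hne hsub
          · obtain ⟨C, hC, hCe⟩ := Finset.mem_image.mp h''
            obtain ⟨hCS, hiC⟩ := Finset.mem_filter.mp hC
            have hne' : C ≠ M := fun h => hiM (h ▸ hiC)
            have hsub' : M ⊆ C := by
              rw [← hCe] at hsub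
              exact subset_trans hsub (Finset.erase_subset i C)
            exact hmax C hCS hne' hsub'
        obtain ⟨U0, hU0d, hU0⟩ :=
          IH (d-1) (by omega) (by omega) g0 T0 hT0 hd0 S0 hrep0 M hMS0 hMd1 hmax0 ξ
        obtain ⟨U1, hU1d, hU1⟩ :=
          IH (d-1) (by omega) (by omega) g1 T1 hT1 hd1 S1 hrep1 M hMS1 hMd1 hmax1 ξ
        refine ⟨DTree.node i U0 U1, ?_, fun x => ?_⟩
        · simp only [DTree.depth]
          omega
        · cases hxi : x i with
          | false =>
            have he : (DTree.node i U0 U1).eval x = U0.eval x := by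
              simp [DTree.eval, hxi]
            rw [he, hU0 x]
            show restrictSet g0 M ξ x = restrictSet f M ξ x
            simp only [hg0, restrictSet]
            congr 1
            funext j
            by_cases hj : j = i
            · subst hj; simp [hiM, hxi]
            · by_cases hjM : j ∈ M <;> simp [hj, hjM]
          | true =>
            have he : (DTree.node i U0 U1).eval x = U1.eval x := by
              simp [DTree.eval, hxi]
            rw [he, hU1 x]
            show restrictSet g1 M ξ x = restrictSet f M ξ x
            simp only [hg1, restrictSet]
            congr 1
            funext j
            by_cases hj : j = i
            · subst hj; simp [hiM, hxi]
            · by_cases hjM : j ∈ M <;> simp [hj, hjM]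

end Stmt3Aux

/-- If `f` is computable by a decision tree of depth at most `d ≥ 1` and `M`
is a maximal monomial of its `F₂`-polynomial representation (with at most `d`
variables), then substituting any values for the variables of `M` yields a
function computable by a decision tree of depth at most `d - 1`. -/
theorem stmt3 {n d : ℕ} (hd : 1 ≤ d) (f : (Fin n → Bool) → Bool)
    (T : DTree n) (hT : ∀ x, T.eval x = f x) (hdepth : T.depth ≤ d)
    (S : Finset (Finset (Fin n))) (hS : Represents S f)
    (M : Finset (Fin n)) (hM : M ∈ S) (hMcard : M.card ≤ d)
    (hmax : ∀ M' ∈ S, M' ≠ M → ¬ M ⊆ M')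
    (ξ : Fin n → Bool) :
    ∃ T' : DTree n, T'.depth ≤ d - 1 ∧ ∀ x, T'.eval x = restrictSet f M ξ x :=
  Stmt3Aux.main d hd f T hT hdepth S hS M hM hMcard hmax ξ
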